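/- Let X and Y be random variables defined on the same probability space. Then for all real numbers a ≤ b, P(a ≤ X ≤ b) ≤ (1/2)(1 + P(|X − Y| ≤ b − a) + d_TV(X, Y)), where d_TV denotes the total variation distance between the distributions of X and Y. -/
import Mathlib


open MeasureTheory

/-- Total variation distance between the laws of two real random variables. -/
noncomputable def dTV {Ω : Type*} [MeasurableSpace Ω] (μ : Measure Ω) (X Y : Ω → ℝ) : ℝ :=
  ⨆ (A : Set ℝ) (_ : MeasurableSet A), |(μ (X ⁻¹' A)).toReal - (μ (Y ⁻¹' A)).toReal|

lemma toReal_mem_unit {Ω : Type*} [MeasurableSpace Ω] (μ : Measure Ω)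
    [IsProbabilityMeasure μ] (s : Set Ω) : 0 ≤ (μ s).toReal ∧ (μ s).toReal ≤ 1 := by
  constructor
  · exact ENNReal.toReal_nonneg
  · have h : μ s ≤ 1 := prob_le_one
    simpa using ENNReal.toReal_mono (by simp) h

lemma dTV_lower {Ω : Type*} [MeasurableSpace Ω] (μ : Measure Ω)
    [IsProbabilityMeasure μ] (X Y : Ω → ℝ) (A : Set ℝ) (hA : MeasurableSet A) :
    |(μ (X ⁻¹' A)).toReal - (μ (Y ⁻¹' A)).toReal| ≤ dTV μ X Y := by
  have hbdd : BddAbove (Set.range fun A : Set ℝ =>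
      ⨆ (_ : MeasurableSet A), |(μ (X ⁻¹' A)).toReal - (μ (Y ⁻¹' A)).toReal|) := by
    refine ⟨1, ?_⟩
    rintro x ⟨B, rfl⟩
    show (⨆ (_ : MeasurableSet B), |(μ (X ⁻¹' B)).toReal - (μ (Y ⁻¹' B)).toReal|) ≤ 1
    by_cases hB : MeasurableSet B
    · rw [ciSup_pos hB]
      obtain ⟨h1, h2⟩ := toReal_mem_unit μ (X ⁻¹' B)
      obtain ⟨h3, h4⟩ := toReal_mem_unit μ (Y ⁻¹' B)
      rw [abs_sub_le_iff]; constructor <;> linarith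
    · simp [hB, Real.iSup_of_isEmpty]
  refine le_ciSup_of_le hbdd A ?_
  exact le_ciSup (f := fun _ : MeasurableSet A =>
    |(μ (X ⁻¹' A)).toReal - (μ (Y ⁻¹' A)).toReal|)
    ⟨_, by rintro x ⟨_, rfl⟩; exact le_refl _⟩ hA

/-- Chatterjee's lemma: P(a ≤ X ≤ b) ≤ (1/2)(1 + P(|X − Y| ≤ b − a) + d_TV(X, Y)). -/
theorem chatterjee_lemma {Ω : Type*} [MeasurableSpace Ω] (μ : Measure Ω)
    [IsProbabilityMeasure μ] (X Y : Ω → ℝ) (hX : Measurable X) (hY : Measurable Y)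
    (a b : ℝ) (hab : a ≤ b) :
    (μ {ω | a ≤ X ω ∧ X ω ≤ b}).toReal ≤
      (1 / 2) * (1 + (μ {ω | |X ω - Y ω| ≤ b - a}).toReal + dTV μ X Y) := by
  set S : Set Ω := {ω | a ≤ X ω ∧ X ω ≤ b}
  set T : Set Ω := {ω | a ≤ Y ω ∧ Y ω ≤ b}
  have hSeq : S = X ⁻¹' Set.Icc a b := rfl
  have hTeq : T = Y ⁻¹' Set.Icc a b := rfl
  -- dTV bound
  have hdtv : (μ S).toReal - (μ T).toReal ≤ dTV μ X Y := by
    have := dTV_lower μ X Y (Set.Icc a b) measurableSet_Icc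
    rw [← hSeq, ← hTeq] at this
    exact (le_abs_self _).trans this
  -- inclusion-exclusion
  have hIE : μ (S ∪ T) + μ (S ∩ T) = μ S + μ T :=
    measure_union_add_inter S (hY measurableSet_Icc)
  have hsub : S ∩ T ⊆ {ω | |X ω - Y ω| ≤ b - a} := by
    rintro ω ⟨⟨h1, h2⟩, ⟨h3, h4⟩⟩
    rw [Set.mem_setOf_eq, abs_sub_le_iff]
    constructor <;> linarith
  have hST : (μ (S ∩ T)).toReal ≤ (μ {ω | |X ω - Y ω| ≤ b - a}).toReal :=
    ENNReal.toReal_mono (measure_ne_top μ _) (measure_mono hsub)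
  have hIE' : (μ (S ∪ T)).toReal + (μ (S ∩ T)).toReal = (μ S).toReal + (μ T).toReal := by
    rw [← ENNReal.toReal_add (measure_ne_top μ _) (measure_ne_top μ _),
        ← ENNReal.toReal_add (measure_ne_top μ _) (measure_ne_top μ _), hIE]
  have hU : (μ (S ∪ T)).toReal ≤ 1 := (toReal_mem_unit μ _).2
  linarith
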